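/- Fix α > 0 and let V_α(r) = (1/π)·∫₀¹ arccos(max(−1, (cosh(r) − x^{−1/α})/sinh(r))) dx for r > 0, with V_α(0) = 1. Then V_α is a strictly decreasing continuous bijection from [0,∞) to (0,1]. -/

import Mathlib

open Real Set

/-- The limiting volume function `V_α` in the critical analysis:
`V_α(r) = (1/π) ∫₀¹ arccos(max(−1, (cosh r − x^{−1/α})/sinh r)) dx` for `r > 0`,
and `V_α(0) = 1`. -/
noncomputable def Vfun (α : ℝ) (r : ℝ) : ℝ :=
  if r = 0 then 1
  else (1 / π) * ∫ x in (0:ℝ)..1,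
    Real.arccos (max (-1) ((Real.cosh r - x ^ (-(1 / α))) / Real.sinh r))

open Filter MeasureTheory intervalIntegral

/-- Auxiliary integrand, extended by `π` at `r = 0`. -/
noncomputable def Gaux (α r x : ℝ) : ℝ :=
  if r = 0 then π
  else Real.arccos (max (-1) ((Real.cosh r - x ^ (-(1 / α))) / Real.sinh r))

lemma arccos_anti {x y : ℝ} (h : x ≤ y) : Real.arccos y ≤ Real.arccos x :=
  sub_le_sub_left (Real.monotone_arcsin h) _

lemma one_le_t {α x : ℝ} (hα : 0 < α) (hx : 0 < x) (hx1 : x ≤ 1) :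
    1 ≤ x ^ (-(1 / α)) :=
  Real.one_le_rpow_of_pos_of_le_one_of_nonpos hx hx1 (neg_nonpos.2 (by positivity))

lemma t_lt_exp {α r x : ℝ} (hα : 0 < α) (hx0 : Real.exp (-(α * r)) < x) :
    x ^ (-(1 / α)) < Real.exp r := by
  have h0 : (0:ℝ) < Real.exp (-(α * r)) := Real.exp_pos _
  have hneg : -(1 / α) < 0 := neg_lt_zero.2 (by positivity)
  have h := Real.rpow_lt_rpow_of_neg h0 hx0 hneg
  rwa [Real.rpow_def_of_pos h0, Real.log_exp,
    show -(α * r) * -(1 / α) = r by field_simp] at h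

lemma f_lt_one {r t : ℝ} (hr : 0 < r) (ht : 1 ≤ t) :
    (Real.cosh r - t) / Real.sinh r < 1 := by
  rw [div_lt_one (Real.sinh_pos_iff.2 hr)]
  have h := Real.cosh_sub_sinh r
  have h2 : Real.exp (-r) < 1 := Real.exp_lt_one_iff.2 (by linarith)
  linarith

lemma neg_one_lt_f {r t : ℝ} (hr : 0 < r) (ht : t < Real.exp r) :
    -1 < (Real.cosh r - t) / Real.sinh r := by
  rw [lt_div_iff₀ (Real.sinh_pos_iff.2 hr)]
  have h := Real.cosh_add_sinh r
  nlinarith [Real.sinh_pos_iff.2 hr]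

lemma f_strictMono {r1 r2 t : ℝ} (h1 : 0 < r1) (h12 : r1 < r2) (ht : 1 ≤ t) :
    (Real.cosh r1 - t) / Real.sinh r1 < (Real.cosh r2 - t) / Real.sinh r2 := by
  have s1 := Real.sinh_pos_iff.2 h1
  have s2 := Real.sinh_pos_iff.2 (h1.trans h12)
  rw [div_lt_div_iff₀ s1 s2]
  have hd : 0 < r2 - r1 := by linarith
  have key : Real.sinh r2
      = Real.sinh r1 * Real.cosh (r2 - r1) + Real.cosh r1 * Real.sinh (r2 - r1) := by
    rw [← Real.sinh_add]; ring_nf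
  have key2 : Real.cosh r2
      = Real.cosh r1 * Real.cosh (r2 - r1) + Real.sinh r1 * Real.sinh (r2 - r1) := by
    rw [← Real.cosh_add]; ring_nf
  have hc1 : 1 < Real.cosh (r2 - r1) := Real.one_lt_cosh.2 hd.ne'
  have hc2 : 1 < Real.cosh r1 := Real.one_lt_cosh.2 h1.ne'
  have hsd : 0 < Real.sinh (r2 - r1) := Real.sinh_pos_iff.2 hd
  have hsq : Real.cosh r1 ^ 2 - Real.sinh r1 ^ 2 = 1 := Real.cosh_sq_sub_sinh_sq r1
  nlinarith [mul_pos s1 hsd, mul_pos hsd (sub_pos.2 hc2),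
    mul_nonneg (sub_nonneg.2 ht) (mul_pos s1 (sub_pos.2 hc1)).le,
    mul_nonneg (sub_nonneg.2 ht) (mul_pos hsd (sub_pos.2 hc2)).le]

lemma Gaux_nonneg (α r x : ℝ) : 0 ≤ Gaux α r x := by
  unfold Gaux; split_ifs
  · exact Real.pi_pos.le
  · exact Real.arccos_nonneg _

lemma Gaux_le_pi (α r x : ℝ) : Gaux α r x ≤ π := by
  unfold Gaux; split_ifs
  · exact le_refl _
  · exact Real.arccos_le_pi _

lemma Gaux_zero_left (α x : ℝ) : Gaux α 0 x = π := if_pos rfl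

lemma Gaux_of_pos {α r : ℝ} (hr : 0 < r) (x : ℝ) :
    Gaux α r x = Real.arccos (max (-1) ((Real.cosh r - x ^ (-(1 / α))) / Real.sinh r)) :=
  if_neg hr.ne'

lemma Gaux_le {α r1 r2 x : ℝ} (hα : 0 < α) (h1 : 0 ≤ r1) (h12 : r1 < r2)
    (hx0 : 0 < x) (hx1 : x ≤ 1) : Gaux α r2 x ≤ Gaux α r1 x := by
  have hr2 : 0 < r2 := h1.trans_lt h12
  rcases eq_or_lt_of_le h1 with h | h
  · rw [← h, Gaux_zero_left]; exact Gaux_le_pi _ _ _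
  · rw [Gaux_of_pos h, Gaux_of_pos hr2]
    exact arccos_anti (max_le_max (le_refl _) (f_strictMono h h12 (one_le_t hα hx0 hx1)).le)

lemma Gaux_lt {α r1 r2 x : ℝ} (hα : 0 < α) (h1 : 0 ≤ r1) (h12 : r1 < r2)
    (hx0 : Real.exp (-(α * r2)) < x) (hx1 : x ≤ 1) : Gaux α r2 x < Gaux α r1 x := by
  have hr2 : 0 < r2 := h1.trans_lt h12
  have hxpos : 0 < x := (Real.exp_pos _).trans hx0
  have ht1 : 1 ≤ x ^ (-(1 / α)) := one_le_t hα hxpos hx1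
  have hf2gt : -1 < (Real.cosh r2 - x ^ (-(1 / α))) / Real.sinh r2 :=
    neg_one_lt_f hr2 (t_lt_exp hα hx0)
  have hf2lt : (Real.cosh r2 - x ^ (-(1 / α))) / Real.sinh r2 < 1 := f_lt_one hr2 ht1
  rcases eq_or_lt_of_le h1 with h | h
  · rw [← h, Gaux_zero_left, Gaux_of_pos hr2]
    exact lt_of_le_of_ne (Real.arccos_le_pi _)
      (fun hh => absurd (le_trans (le_max_right _ _) (Real.arccos_eq_pi.1 hh))
        (not_le.2 hf2gt))
  · rw [Gaux_of_pos h, Gaux_of_pos hr2]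
    have hf1lt : (Real.cosh r1 - x ^ (-(1 / α))) / Real.sinh r1 < 1 := f_lt_one h ht1
    refine Real.strictAntiOn_arccos ⟨le_max_left _ _, max_le (by norm_num) hf1lt.le⟩
      ⟨le_max_left _ _, max_le (by norm_num) hf2lt.le⟩ ?_
    have := f_strictMono h h12 ht1
    rw [max_eq_right hf2gt.le]
    exact max_lt hf2gt this

lemma Gaux_pos {α r x : ℝ} (hα : 0 < α) (hr : 0 ≤ r) (hx0 : 0 < x) (hx1 : x ≤ 1) :
    0 < Gaux α r x := by
  rcases eq_or_lt_of_le hr with h | h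
  · rw [← h, Gaux_zero_left]; exact Real.pi_pos
  · rw [Gaux_of_pos h]
    exact Real.arccos_pos.2 (max_lt (by norm_num) (f_lt_one h (one_le_t hα hx0 hx1)))

lemma Gaux_zero {α r : ℝ} (hα : 0 < α) (hr : 0 < r) : Gaux α r 0 = 0 := by
  rw [Gaux_of_pos hr, Real.zero_rpow (neg_ne_zero.2 (by positivity : (1/α) ≠ 0)), sub_zero]
  have hs := Real.sinh_pos_iff.2 hr
  have h := Real.cosh_sub_sinh r
  have h2 : Real.sinh r ≤ Real.cosh r := by nlinarith [Real.exp_pos (-r)]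
  refine Real.arccos_eq_zero.2 (le_trans ?_ (le_max_right _ _))
  rw [le_div_iff₀ hs]; linarith

lemma Gaux_meas (α r : ℝ) : Measurable (Gaux α r) := by
  unfold Gaux
  split_ifs
  · exact measurable_const
  · have hm : Measurable fun x : ℝ => x ^ (-(1 / α)) := by measurability
    exact Real.continuous_arccos.measurable.comp
      (measurable_const.max ((measurable_const.sub hm).div_const _))

lemma Gaux_intble (α r a b : ℝ) : IntervalIntegrable (Gaux α r) volume a b := by
  rw [intervalIntegrable_iff]
  haveI : IsFiniteMeasure (volume.restrict (Set.uIoc a b)) :=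
    ⟨by rw [Measure.restrict_apply_univ]; exact measure_Ioc_lt_top⟩
  refine ⟨(Gaux_meas α r).aestronglyMeasurable.restrict, ?_⟩
  apply HasFiniteIntegral.of_bounded (C := π)
  refine ae_of_all _ (fun x => ?_)
  rw [Real.norm_eq_abs, abs_of_nonneg (Gaux_nonneg α r x)]
  exact Gaux_le_pi α r x

lemma intGaux_lt {α r1 r2 : ℝ} (hα : 0 < α) (h1 : 0 ≤ r1) (h12 : r1 < r2) :
    ∫ x in (0:ℝ)..1, Gaux α r2 x < ∫ x in (0:ℝ)..1, Gaux α r1 x := by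
  have hr2 : 0 < r2 := h1.trans_lt h12
  set c := Real.exp (-(α * r2)) with hc
  have hc0 : 0 < c := Real.exp_pos _
  have hc1 : c < 1 := Real.exp_lt_one_iff.2 (by nlinarith)
  have hsplit1 := integral_add_adjacent_intervals
    (Gaux_intble α r1 0 c) (Gaux_intble α r1 c 1)
  have hsplit2 := integral_add_adjacent_intervals
    (Gaux_intble α r2 0 c) (Gaux_intble α r2 c 1)
  have hA : ∫ x in (0:ℝ)..c, Gaux α r2 x ≤ ∫ x in (0:ℝ)..c, Gaux α r1 x := by
    refine integral_mono_on hc0.le (Gaux_intble α r2 0 c) (Gaux_intble α r1 0 c)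
      (fun x hx => ?_)
    rcases eq_or_lt_of_le hx.1 with h | h
    · rcases eq_or_lt_of_le h1 with h1' | h1'
      · rw [← h1', Gaux_zero_left]; exact Gaux_le_pi _ _ _
      · rw [← h, Gaux_zero hα hr2, Gaux_zero hα h1']
    · exact Gaux_le hα h1 h12 h (hx.2.trans hc1.le)
  have hB : 0 < ∫ x in c..1, (Gaux α r1 x - Gaux α r2 x) := by
    refine intervalIntegral_pos_of_pos_on
      ((Gaux_intble α r1 c 1).sub (Gaux_intble α r2 c 1)) (fun x hx => ?_) hc1
    exact sub_pos.2 (Gaux_lt hα h1 h12 hx.1 hx.2.le)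
  rw [integral_sub (Gaux_intble α r1 c 1) (Gaux_intble α r2 c 1)] at hB
  linarith

lemma intGaux_pos {α r : ℝ} (hα : 0 < α) (hr : 0 ≤ r) :
    0 < ∫ x in (0:ℝ)..1, Gaux α r x := by
  refine intervalIntegral_pos_of_pos_on (Gaux_intble α r 0 1)
    (fun x hx => Gaux_pos hα hr hx.1 hx.2.le) one_pos

lemma Vfun_eq {α r : ℝ} (hr : 0 ≤ r) :
    Vfun α r = (1 / π) * ∫ x in (0:ℝ)..1, Gaux α r x := by
  rcases eq_or_lt_of_le hr with h | h
  · rw [← h]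
    have h1 : Vfun α 0 = 1 := by simp [Vfun]
    rw [h1]
    simp only [Gaux_zero_left]
    rw [intervalIntegral.integral_const, smul_eq_mul]
    field_simp
    norm_num
  · simp only [Vfun, Gaux, if_neg h.ne']

lemma Vfun_strictAnti {α : ℝ} (hα : 0 < α) : StrictAntiOn (Vfun α) (Ici 0) := by
  intro r1 h1 r2 h2 h12
  rw [Vfun_eq (α := α) h1, Vfun_eq (α := α) h2]
  have hpi : 0 < 1 / π := by positivity
  exact (mul_lt_mul_iff_right₀ hpi).2 (intGaux_lt hα h1 h12)

lemma Gaux_contWithinAt {α : ℝ} (hα : 0 < α) {t : ℝ} (ht0 : 0 < t) (ht1 : t < 1)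
    {r₀ : ℝ} (hr₀ : 0 ≤ r₀) :
    ContinuousWithinAt (fun r => Gaux α r t) (Ici 0) r₀ := by
  rcases eq_or_lt_of_le hr₀ with h | h
  · -- r₀ = 0 : the function is eventually constant π.
    subst h
    set tt := t ^ (-(1 / α)) with htt
    have htt1 : 1 < tt := by
      rw [htt]
      exact (Real.one_lt_rpow_iff_of_pos ht0).2 (Or.inr ⟨ht1, neg_lt_zero.2 (by positivity)⟩)
    have hε : 0 < Real.log tt := Real.log_pos htt1
    refine ContinuousWithinAt.congr_of_eventuallyEq
      (continuousWithinAt_const : ContinuousWithinAt (fun _ : ℝ => π) (Ici 0) 0) ?_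
      (Gaux_zero_left α t)
    have hmem : Ico (0:ℝ) (Real.log tt) ∈ nhdsWithin 0 (Ici 0) :=
      Ico_mem_nhdsGE_of_mem ⟨le_refl _, hε⟩
    filter_upwards [hmem] with r hr
    rcases eq_or_lt_of_le hr.1 with h | h
    · rw [← h, Gaux_zero_left]
    · rw [Gaux_of_pos h]
      have hex : Real.exp r < tt := by
        calc Real.exp r < Real.exp (Real.log tt) := Real.exp_lt_exp.2 hr.2
        _ = tt := Real.exp_log (by linarith)
      have hfle : (Real.cosh r - tt) / Real.sinh r ≤ -1 := by
        rw [div_le_iff₀ (Real.sinh_pos_iff.2 h)]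
        have := Real.cosh_add_sinh r
        nlinarith
      rw [max_eq_left hfle, Real.arccos_neg_one]
  · -- r₀ > 0 : continuity of the explicit formula.
    have hev : ∀ᶠ r in nhds r₀, (fun r =>
        Real.arccos (max (-1) ((Real.cosh r - t ^ (-(1 / α))) / Real.sinh r))) r
        = Gaux α r t := by
      filter_upwards [eventually_gt_nhds h] with r hr
      rw [Gaux_of_pos hr]
    have hca : ContinuousAt (fun r =>
        Real.arccos (max (-1) ((Real.cosh r - t ^ (-(1 / α))) / Real.sinh r))) r₀ := by
      refine Real.continuous_arccos.continuousAt.comp ?_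
      refine continuousAt_const.max ?_
      exact (Real.continuous_cosh.continuousAt.sub continuousAt_const).div
        Real.continuous_sinh.continuousAt (Real.sinh_pos_iff.2 h).ne'
    exact (hca.congr hev).continuousWithinAt

lemma Vfun_contOn {α : ℝ} (hα : 0 < α) : ContinuousOn (Vfun α) (Ici 0) := by
  have hW : ContinuousOn (fun r => (1 / π) * ∫ x in (0:ℝ)..1, Gaux α r x) (Ici 0) := by
    intro r₀ hr₀
    refine continuousWithinAt_const.mul ?_
    refine intervalIntegral.continuousWithinAt_of_dominated_interval
      (bound := fun _ => π) (Eventually.of_forall fun r =>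
        (Gaux_meas α r).aestronglyMeasurable.restrict)
      (Eventually.of_forall fun r => ae_of_all _ fun x _ => ?_)
      intervalIntegrable_const ?_
    · rw [Real.norm_eq_abs, abs_of_nonneg (Gaux_nonneg α r x)]
      exact Gaux_le_pi α r x
    · have h1 : ∀ᵐ x : ℝ ∂(volume : MeasureTheory.Measure ℝ), x ≠ 1 := by
        rw [MeasureTheory.ae_iff]
        refine MeasureTheory.measure_mono_null (t := {(1:ℝ)}) (fun x hx => ?_)
          Real.volume_singleton
        simpa using hx
      filter_upwards [h1] with x hx1 hx
      rw [uIoc_of_le (by norm_num : (0:ℝ) ≤ 1)] at hx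
      exact Gaux_contWithinAt hα hx.1 (lt_of_le_of_ne hx.2 hx1) hr₀
  exact hW.congr (fun r hr => Vfun_eq hr)

lemma f_tendsto {t : ℝ} :
    Tendsto (fun r => (Real.cosh r - t) / Real.sinh r) atTop (nhds 1) := by
  have hexp : Tendsto (fun r : ℝ => Real.exp (-r)) atTop (nhds 0) :=
    Real.tendsto_exp_neg_atTop_nhds_zero
  have main0 : Tendsto (fun r : ℝ =>
      (1 + Real.exp (-r) * Real.exp (-r) - 2 * t * Real.exp (-r))
        / (1 - Real.exp (-r) * Real.exp (-r))) atTop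
      (nhds ((1 + 0 * 0 - 2 * t * 0) / (1 - 0 * 0))) :=
    Tendsto.div
      ((tendsto_const_nhds.add (hexp.mul hexp)).sub (tendsto_const_nhds.mul hexp))
      (tendsto_const_nhds.sub (hexp.mul hexp)) (by norm_num)
  have main : Tendsto (fun r : ℝ =>
      (1 + Real.exp (-r) * Real.exp (-r) - 2 * t * Real.exp (-r))
        / (1 - Real.exp (-r) * Real.exp (-r))) atTop (nhds 1) := by
    have heq : (1 + 0 * 0 - 2 * t * 0) / (1 - 0 * 0) = (1:ℝ) := by norm_num
    rwa [heq] at main0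
  refine main.congr' ?_
  filter_upwards [eventually_gt_atTop (0:ℝ)] with r hr
  have e1 : (0:ℝ) < Real.exp r := Real.exp_pos _
  have hEgt : 1 < Real.exp r := by
    rw [← Real.exp_zero]; exact Real.exp_lt_exp.2 hr
  have hinv : (Real.exp r)⁻¹ < 1 := inv_lt_one_of_one_lt₀ hEgt
  have hinv0 : (0:ℝ) < (Real.exp r)⁻¹ := by positivity
  have h1 : (Real.exp r)⁻¹ < Real.exp r := by linarith
  have hne : Real.exp r - (Real.exp r)⁻¹ ≠ 0 := sub_ne_zero.2 h1.ne'
  have hne2 : 1 - (Real.exp r)⁻¹ * (Real.exp r)⁻¹ ≠ 0 := by nlinarith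
  rw [Real.cosh_eq, Real.sinh_eq, Real.exp_neg]
  rw [div_eq_div_iff hne2 (div_ne_zero hne two_ne_zero)]
  field_simp

lemma intGaux_tendsto {α : ℝ} (hα : 0 < α) :
    Tendsto (fun r => ∫ x in (0:ℝ)..1, Gaux α r x) atTop (nhds 0) := by
  have key : Tendsto (fun r => ∫ x in (0:ℝ)..1, Gaux α r x) atTop
      (nhds (∫ x in (0:ℝ)..1, (0:ℝ))) := by
    refine intervalIntegral.tendsto_integral_filter_of_dominated_convergence
      (bound := fun _ => π)
      (Eventually.of_forall fun r => (Gaux_meas α r).aestronglyMeasurable.restrict)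
      (Eventually.of_forall fun r => ae_of_all _ fun x _ => ?_)
      intervalIntegrable_const (ae_of_all _ fun x hx => ?_)
    · rw [Real.norm_eq_abs, abs_of_nonneg (Gaux_nonneg α r x)]
      exact Gaux_le_pi α r x
    · rw [uIoc_of_le (by norm_num : (0:ℝ) ≤ 1)] at hx
      set tt := x ^ (-(1 / α)) with htt
      have h1 : Tendsto (fun r => max (-1 : ℝ) ((Real.cosh r - tt) / Real.sinh r))
          atTop (nhds (max (-1 : ℝ) 1)) :=
        Tendsto.max tendsto_const_nhds (f_tendsto (t := tt))
      rw [show max (-1 : ℝ) 1 = 1 by norm_num] at h1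
      have h2 := (Real.continuous_arccos.tendsto 1).comp h1
      rw [Real.arccos_one] at h2
      refine h2.congr' ?_
      filter_upwards [eventually_gt_atTop (0:ℝ)] with r hr
      rw [Gaux_of_pos hr]; rfl
  simpa using key

/-- `V_α` is a strictly decreasing continuous bijection from `[0,∞)` onto `(0,1]`. -/
theorem stmt_7 (α : ℝ) (hα : 0 < α) :
    StrictAntiOn (Vfun α) (Ici 0) ∧ ContinuousOn (Vfun α) (Ici 0) ∧
      BijOn (Vfun α) (Ici 0) (Ioc 0 1) := by
  have hanti := Vfun_strictAnti hα
  have hcont := Vfun_contOn hα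
  have hV0 : Vfun α 0 = 1 := by simp [Vfun]
  have hmaps : MapsTo (Vfun α) (Ici 0) (Ioc 0 1) := by
    intro r hr
    rcases eq_or_lt_of_le (mem_Ici.1 hr) with h | h
    · rw [← h, hV0]; exact ⟨one_pos, le_refl _⟩
    · constructor
      · rw [Vfun_eq h.le]
        exact mul_pos (by positivity) (intGaux_pos hα h.le)
      · have := hanti (mem_Ici.2 (le_refl (0:ℝ))) hr h
        rw [hV0] at this
        exact this.le
  refine ⟨hanti, hcont, hmaps, hanti.injOn, ?_⟩
  -- Surjectivity
  intro y hy
  rcases eq_or_lt_of_le hy.2 with h | h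
  · exact ⟨0, mem_Ici.2 (le_refl _), by rw [hV0, h]⟩
  · -- 0 < y < 1
    have htend : Tendsto (fun r => Vfun α r) atTop (nhds 0) := by
      have h2 : Tendsto (fun r => (1 / π) * ∫ x in (0:ℝ)..1, Gaux α r x)
          atTop (nhds ((1 / π) * 0)) := (intGaux_tendsto hα).const_mul _
      rw [mul_zero] at h2
      refine h2.congr' ?_
      filter_upwards [eventually_gt_atTop (0:ℝ)] with r hr
      rw [Vfun_eq hr.le]
    have hev : ∀ᶠ r in atTop, Vfun α r < y := htend.eventually_lt_const hy.1
    obtain ⟨R, hR1, hR0⟩ := (hev.and (eventually_ge_atTop (0:ℝ))).exists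
    have hIm : Icc (Vfun α R) (Vfun α 0) ⊆ Vfun α '' Icc 0 R :=
      intermediate_value_Icc' hR0 (hcont.mono (fun z hz => hz.1))
    have hy' : y ∈ Icc (Vfun α R) (Vfun α 0) := ⟨hR1.le, by rw [hV0]; exact h.le⟩
    obtain ⟨r, hr, hry⟩ := hIm hy'
    exact ⟨r, mem_Ici.2 hr.1, hry⟩
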